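/- Let k ≤ m ≤ n be positive integers, r_1,…,r_m and c_1,…,c_n positive reals. Then F(k,r,c) = ∑_{I ⊊ {1,…,m}, J ⊊ {1,…,n}, |I|+|J| < k} Pr(r,I)·Pr(c,J) / ((∑_{i∉I} r_i)(∑_{j∉J} c_j)). In particular, F(k,r,c) > 0. -/

import Mathlib

open Finset

/-- The conjectured formula `F(k,r,c)` for the expected minimum `k`-assignment of a random
exponential matrix with rank 1 rate matrix `(r i * c j)`: the sum over proper subsets
`I ⊊ {1,…,m}` and `J ⊊ {1,…,n}` with `|I| + |J| < k` of
`(−1)^{k−1−|I|−|J|} · C(m+n−1−|I|−|J|, k−1−|I|−|J|) / ((∑_{i∉I} r i)(∑_{j∉J} c j))`. -/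
noncomputable def F (k : ℕ) {m n : ℕ} (r : Fin m → ℝ) (c : Fin n → ℝ) : ℝ :=
  ∑ I : Finset (Fin m), ∑ J : Finset (Fin n),
    if I ≠ Finset.univ ∧ J ≠ Finset.univ ∧ I.card + J.card < k then
      (-1 : ℝ) ^ (k - 1 - I.card - J.card) *
        ((m + n - 1 - I.card - J.card).choose (k - 1 - I.card - J.card) : ℝ) /
        ((∑ i ∈ Iᶜ, r i) * (∑ j ∈ Jᶜ, c j))
    else 0

/-- `Pr(r, (i_1, …, i_k))`: the urn probability
`∏_{s=1}^{k} r_{i_s} / (R − ∑_{u<s} r_{i_u})` for a sequence `ι` of (distinct) indices. -/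
noncomputable def prSeq {m k : ℕ} (r : Fin m → ℝ) (ι : Fin k → Fin m) : ℝ :=
  ∏ s : Fin k,
    r (ι s) / ((∑ i, r i) - ∑ u ∈ Finset.univ.filter fun u => u < s, r (ι u))

/-- `Pr(r, I)`: the sum of `Pr(r, (i_1, …, i_t))` over all orderings of the set `I`. -/
noncomputable def prSet {m : ℕ} (r : Fin m → ℝ) (I : Finset (Fin m)) : ℝ :=
  ∑ ι : Fin I.card → Fin m,
    if Function.Injective ι ∧ Finset.univ.image ι = I then prSeq r ι else 0

-- basic lemmas test
lemma rho_pos {m : ℕ} (r : Fin m → ℝ) (hr : ∀ i, 0 < r i) {I : Finset (Fin m)} (hI : I ≠ univ) :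
    0 < ∑ i ∈ Iᶜ, r i := by
  apply Finset.sum_pos (fun i _ => hr i)
  rwa [← Finset.compl_ne_univ_iff_nonempty, compl_compl]

lemma sum_eq_sub {m : ℕ} (r : Fin m → ℝ) (S : Finset (Fin m)) :
    ∑ i ∈ S, r i = (∑ i, r i) - ∑ i ∈ Sᶜ, r i := by
  have := Finset.sum_compl_add_sum S r
  linarith

lemma neg_one_pow_sub {a b : ℕ} (h : b ≤ a) : (-1:ℝ)^(a-b) = (-1)^a * (-1)^b := by
  have h2 : (-1:ℝ)^b * (-1)^b = 1 := by rw [← pow_add, ← two_mul, pow_mul]; norm_num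
  calc (-1:ℝ)^(a-b) = (-1)^(a-b) * ((-1)^b * (-1)^b) := by rw [h2, mul_one]
    _ = (-1)^(a-b+b) * (-1)^b := by rw [pow_add]; ring
    _ = (-1)^a * (-1)^b := by rw [Nat.sub_add_cancel h]

lemma sum_pow_neg_one {m : ℕ} {I : Finset (Fin m)} (hne : I.Nonempty) :
    ∑ T ∈ I.powerset, (-1:ℝ)^(I.card - T.card) = 0 := by
  have : ∀ T ∈ I.powerset, (-1:ℝ)^(I.card - T.card) = (-1)^I.card * (-1)^T.card := by
    intro T hT
    exact neg_one_pow_sub (card_le_card (mem_powerset.1 hT))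
  rw [Finset.sum_congr rfl this, ← Finset.mul_sum]
  have : ∑ T ∈ I.powerset, (-1:ℝ)^T.card = ((∑ T ∈ I.powerset, (-1:ℤ)^T.card : ℤ) : ℝ) := by
    push_cast; rfl
  rw [this, Finset.sum_powerset_neg_one_pow_card_of_nonempty hne]
  simp

lemma filter_sum_castSucc {t : ℕ} (f : Fin (t+1) → ℝ) (s : Fin t) :
    ∑ u ∈ univ.filter (fun u => u < Fin.castSucc s), f u
      = ∑ u ∈ univ.filter (fun u => u < s), f (Fin.castSucc u) := by
  rw [Finset.sum_filter, Finset.sum_filter, Fin.sum_univ_castSucc]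
  have h1 : ¬ (Fin.last t < Fin.castSucc s) := (Fin.castSucc_lt_last s).asymm
  simp [Fin.castSucc_lt_castSucc_iff, h1]

lemma filter_sum_last {t : ℕ} (f : Fin (t+1) → ℝ) :
    ∑ u ∈ univ.filter (fun u => u < Fin.last t), f u = ∑ u : Fin t, f (Fin.castSucc u) := by
  rw [Finset.sum_filter, Fin.sum_univ_castSucc]
  simp [Fin.castSucc_lt_last]

lemma prSeq_snoc {m t : ℕ} (r : Fin m → ℝ) (ι : Fin t → Fin m) (i : Fin m) :
    prSeq r (Fin.snoc ι i) = prSeq r ι * (r i / ((∑ j, r j) - ∑ u, r (ι u))) := by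
  unfold prSeq
  rw [Fin.prod_univ_castSucc]
  congr 1
  · apply Finset.prod_congr rfl
    intro s _
    rw [Fin.snoc_castSucc, filter_sum_castSucc (fun u => r ((Fin.snoc ι i : Fin (t+1) → Fin m) u)) s]
    simp [Fin.snoc_castSucc]
  · rw [Fin.snoc_last, filter_sum_last (fun u => r ((Fin.snoc ι i : Fin (t+1) → Fin m) u))]
    simp [Fin.snoc_castSucc]

lemma image_snoc {m t : ℕ} (ι : Fin t → Fin m) (i : Fin m) :
    univ.image (Fin.snoc ι i : Fin (t+1) → Fin m) = insert i (univ.image ι) := by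
  ext x
  simp only [mem_image, mem_insert, mem_univ, true_and]
  constructor
  · rintro ⟨u, rfl⟩
    induction u using Fin.lastCases with
    | last => left; simp
    | cast u => right; exact ⟨u, by simp⟩
  · rintro (rfl | ⟨u, rfl⟩)
    · exact ⟨Fin.last t, by simp⟩
    · exact ⟨u.castSucc, by simp⟩

lemma snoc_inj_image {m t : ℕ} {ι : Fin t → Fin m} {i : Fin m} {I : Finset (Fin m)} :
    (Function.Injective (Fin.snoc ι i : Fin (t+1) → Fin m)
        ∧ Finset.univ.image (Fin.snoc ι i : Fin (t+1) → Fin m) = I)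
    ↔ (i ∈ I ∧ Function.Injective ι ∧ Finset.univ.image ι = I.erase i) := by
  constructor
  · rintro ⟨hinj, himg⟩
    have hcomp : ι = (Fin.snoc ι i : Fin (t+1) → Fin m) ∘ Fin.castSucc := by
      funext u; simp
    have hιinj : Function.Injective ι := by
      rw [hcomp]; exact hinj.comp (Fin.castSucc_injective t)
    have hiI : i ∈ I := by
      rw [← himg]; exact mem_image.2 ⟨Fin.last t, mem_univ _, by simp⟩
    have hinotin : i ∉ univ.image ι := by
      intro hmem
      obtain ⟨u, _, hu⟩ := mem_image.1 hmem
      have : (Fin.snoc ι i : Fin (t+1) → Fin m) u.castSucc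
          = (Fin.snoc ι i : Fin (t+1) → Fin m) (Fin.last t) := by simp [hu]
      have := hinj this
      exact absurd this (Fin.ne_last_of_lt (Fin.castSucc_lt_last u))
    refine ⟨hiI, hιinj, ?_⟩
    rw [← himg, image_snoc, Finset.erase_insert hinotin]
  · rintro ⟨hiI, hιinj, himg⟩
    have hinotin : i ∉ univ.image ι := by rw [himg]; exact notMem_erase i I
    constructor
    · intro a b hab
      induction a using Fin.lastCases with
      | last =>
        induction b using Fin.lastCases with
        | last => rfl
        | cast b =>
          exfalso; rw [Fin.snoc_last, Fin.snoc_castSucc] at hab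
          exact hinotin (mem_image.2 ⟨b, mem_univ _, hab.symm⟩)
      | cast a =>
        induction b using Fin.lastCases with
        | last =>
          exfalso; rw [Fin.snoc_last, Fin.snoc_castSucc] at hab
          exact hinotin (mem_image.2 ⟨a, mem_univ _, hab⟩)
        | cast b =>
          rw [Fin.snoc_castSucc, Fin.snoc_castSucc] at hab
          rw [hιinj hab]
    · rw [image_snoc, himg, Finset.insert_erase hiI]

noncomputable def prAux {m : ℕ} (t : ℕ) (r : Fin m → ℝ) (I : Finset (Fin m)) : ℝ :=
  ∑ ι : Fin t → Fin m,
    if Function.Injective ι ∧ Finset.univ.image ι = I then prSeq r ι else 0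

lemma prSet_eq_prAux {m : ℕ} (r : Fin m → ℝ) (I : Finset (Fin m)) :
    prSet r I = prAux I.card r I := rfl

lemma prAux_zero {m : ℕ} (r : Fin m → ℝ) : prAux 0 r (∅ : Finset (Fin m)) = 1 := by
  have h1 : ∀ ι : Fin 0 → Fin m, Function.Injective ι := fun ι a => a.elim0
  have h2 : ∀ ι : Fin 0 → Fin m, prSeq r ι = 1 := by
    intro ι; unfold prSeq; simp
  simp [prAux, h1, h2]

lemma prAux_succ {m : ℕ} (t : ℕ) (r : Fin m → ℝ) (I : Finset (Fin m)) :
    prAux (t+1) r I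
      = ∑ i ∈ I, prAux t r (I.erase i) * (r i / (∑ j ∈ (I.erase i)ᶜ, r j)) := by
  unfold prAux
  rw [← Equiv.sum_comp (Fin.snocEquiv (fun _ => Fin m))
    (fun ι => if Function.Injective ι ∧ Finset.univ.image ι = I then prSeq r ι else 0)]
  rw [Fintype.sum_prod_type]
  have key : ∀ i : Fin m, ∀ ι : Fin t → Fin m,
      (if Function.Injective (Fin.snoc ι i : Fin (t+1) → Fin m)
          ∧ Finset.univ.image (Fin.snoc ι i : Fin (t+1) → Fin m) = I
        then prSeq r (Fin.snoc ι i) else 0)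
      = if i ∈ I then
          ((if Function.Injective ι ∧ Finset.univ.image ι = I.erase i then prSeq r ι else 0)
            * (r i / (∑ j ∈ (I.erase i)ᶜ, r j))) else 0 := by
    intro i ι
    by_cases h : Function.Injective ι ∧ Finset.univ.image ι = I.erase i ∧ i ∈ I
    · obtain ⟨hinj, himg, hiI⟩ := h
      rw [if_pos (snoc_inj_image.2 ⟨hiI, hinj, himg⟩), if_pos hiI, if_pos ⟨hinj, himg⟩]
      rw [prSeq_snoc]
      congr 2
      have : ∑ u : Fin t, r (ι u) = ∑ j ∈ univ.image ι, r j :=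
        (Finset.sum_image (fun a _ b _ h => hinj h)).symm
      rw [this, himg]
      have := Finset.sum_compl_add_sum (I.erase i) r
      linarith
    · by_cases hiI : i ∈ I
      · have hcond : ¬ (Function.Injective ι ∧ Finset.univ.image ι = I.erase i) := by
          intro ⟨h1, h2⟩; exact h ⟨h1, h2, hiI⟩
        rw [if_neg (fun hc => hcond (snoc_inj_image.1 hc).2), if_pos hiI, if_neg hcond, zero_mul]
      · rw [if_neg (fun hc => hiI (snoc_inj_image.1 hc).1), if_neg hiI]
  calc ∑ x : Fin m, ∑ ι : Fin t → Fin m,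
        (if Function.Injective (Fin.snocEquiv (fun _ => Fin m) (x, ι))
            ∧ Finset.univ.image (Fin.snocEquiv (fun _ => Fin m) (x, ι)) = I
          then prSeq r (Fin.snocEquiv (fun _ => Fin m) (x, ι)) else 0)
      = ∑ i : Fin m, if i ∈ I then
          prAux t r (I.erase i) * (r i / (∑ j ∈ (I.erase i)ᶜ, r j)) else 0 := by
        apply Finset.sum_congr rfl
        intro i _
        by_cases hiI : i ∈ I
        · rw [if_pos hiI, prAux, Finset.sum_mul]
          apply Finset.sum_congr rfl
          intro ι _
          have hs : (Fin.snocEquiv (fun _ => Fin m)) (i, ι) = Fin.snoc ι i := rfl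
          rw [hs, key i ι, if_pos hiI]
        · rw [if_neg hiI]
          apply Finset.sum_eq_zero
          intro ι _
          have hs : (Fin.snocEquiv (fun _ => Fin m)) (i, ι) = Fin.snoc ι i := rfl
          rw [hs, key i ι, if_neg hiI]
    _ = _ := by rw [Finset.sum_ite_mem, Finset.univ_inter]; rfl

noncomputable def G {m : ℕ} (r : Fin m → ℝ) (I : Finset (Fin m)) : ℝ :=
  (∑ i ∈ Iᶜ, r i) * ∑ T ∈ I.powerset, (-1:ℝ)^(I.card - T.card) / (∑ i ∈ Tᶜ, r i)

lemma subset_ne_univ {m : ℕ} {T I : Finset (Fin m)} (h : T ⊆ I) (hI : I ≠ univ) : T ≠ univ := by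
  intro h0; exact hI (univ_subset_iff.1 (h0 ▸ h))

lemma G_empty {m : ℕ} (r : Fin m → ℝ) (hr : ∀ i, 0 < r i)
    (h : (∅ : Finset (Fin m)) ≠ univ) : G r ∅ = 1 := by
  have h0 : (0:ℝ) < ∑ i ∈ (∅ : Finset (Fin m))ᶜ, r i := rho_pos r hr h
  simp only [G, powerset_empty, sum_singleton, card_empty, Nat.sub_self, pow_zero]
  field_simp

lemma G_rec {m : ℕ} (r : Fin m → ℝ) (hr : ∀ i, 0 < r i) {I : Finset (Fin m)}
    (hI : I ≠ univ) (hne : I.Nonempty) :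
    G r I = ∑ i ∈ I, G r (I.erase i) * (r i / (∑ j ∈ (I.erase i)ᶜ, r j)) := by
  have hrhoT : ∀ T : Finset (Fin m), T ⊆ I → (0:ℝ) < ∑ i ∈ Tᶜ, r i :=
    fun T hT => rho_pos r hr (subset_ne_univ hT hI)
  -- rewrite each RHS term
  have step1 : ∀ i ∈ I, G r (I.erase i) * (r i / (∑ j ∈ (I.erase i)ᶜ, r j))
      = ∑ T ∈ I.powerset, (if i ∉ T then
          r i * ((-1:ℝ)^(I.card - 1 - T.card) / (∑ j ∈ Tᶜ, r j)) else 0) := by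
    intro i hi
    have he : I.erase i ⊆ I := erase_subset i I
    have hrho : (0:ℝ) < ∑ j ∈ (I.erase i)ᶜ, r j := hrhoT _ he
    have hGe : G r (I.erase i) * (r i / (∑ j ∈ (I.erase i)ᶜ, r j))
        = r i * ∑ T ∈ (I.erase i).powerset, (-1:ℝ)^((I.erase i).card - T.card) / (∑ j ∈ Tᶜ, r j) := by
      have haux : ∀ (a x S : ℝ), a ≠ 0 → (a*S)*(x/a) = x*S := by
        intro a x S ha; field_simp
      rw [G]; exact haux _ _ _ (ne_of_gt hrho)
    rw [hGe, card_erase_of_mem hi]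
    have hpow : (I.erase i).powerset = I.powerset.filter (fun T => i ∉ T) := by
      ext T
      simp only [mem_powerset, mem_filter, Finset.subset_erase]
    rw [hpow, Finset.sum_filter, Finset.mul_sum]
    apply Finset.sum_congr rfl
    intro T _
    split <;> simp
  rw [Finset.sum_congr rfl step1, Finset.sum_comm]
  -- now: ∑ T ∈ I.powerset, ∑ i ∈ I, ...
  have step2 : ∀ T ∈ I.powerset,
      (∑ i ∈ I, if i ∉ T then r i * ((-1:ℝ)^(I.card - 1 - T.card) / (∑ j ∈ Tᶜ, r j)) else 0)
      = (-1:ℝ)^(I.card - 1 - T.card) * (((∑ j ∈ Tᶜ, r j) - (∑ j ∈ Iᶜ, r j)) / (∑ j ∈ Tᶜ, r j)) := by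
    intro T hT
    rw [mem_powerset] at hT
    rw [← Finset.sum_filter]
    have : ∑ i ∈ I.filter (fun i => i ∉ T), (r i * ((-1:ℝ)^(I.card - 1 - T.card) / (∑ j ∈ Tᶜ, r j)))
        = (∑ i ∈ I \ T, r i) * ((-1:ℝ)^(I.card - 1 - T.card) / (∑ j ∈ Tᶜ, r j)) := by
      rw [Finset.sum_mul, Finset.sdiff_eq_filter]
    rw [this]
    have hsd : ∑ i ∈ I \ T, r i = (∑ j ∈ Tᶜ, r j) - (∑ j ∈ Iᶜ, r j) := by
      rw [Finset.sum_sdiff_eq_sub hT]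
      have h1 := Finset.sum_compl_add_sum I r
      have h2 := Finset.sum_compl_add_sum T r
      linarith
    rw [hsd]; ring
  rw [Finset.sum_congr rfl step2]
  -- split off T = I
  have hIp : I ∈ I.powerset := mem_powerset_self I
  rw [← Finset.sum_erase_add _ _ hIp]
  have hTI : ((-1:ℝ)^(I.card - 1 - I.card) * (((∑ j ∈ Iᶜ, r j) - (∑ j ∈ Iᶜ, r j)) / (∑ j ∈ Iᶜ, r j))) = 0 := by
    simp
  rw [hTI, add_zero]
  -- G side: split off T = I as well
  have hGsplit : G r I = (∑ j ∈ Iᶜ, r j) *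
      (∑ T ∈ I.powerset.erase I, (-1:ℝ)^(I.card - T.card) / (∑ j ∈ Tᶜ, r j)) + 1 := by
    rw [G, ← Finset.sum_erase_add _ _ hIp, mul_add, Nat.sub_self, pow_zero]
    rw [one_div, mul_inv_cancel₀ (ne_of_gt (hrhoT I (subset_refl I)))]
  rw [hGsplit]
  -- pointwise: for T ⊊ I
  have hpoint : ∀ T ∈ I.powerset.erase I,
      (-1:ℝ)^(I.card - 1 - T.card) * (((∑ j ∈ Tᶜ, r j) - (∑ j ∈ Iᶜ, r j)) / (∑ j ∈ Tᶜ, r j))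
      = (-1:ℝ)^(I.card - 1 - T.card)
        + (∑ j ∈ Iᶜ, r j) * ((-1:ℝ)^(I.card - T.card) / (∑ j ∈ Tᶜ, r j)) := by
    intro T hT
    obtain ⟨hTne, hTsub⟩ := Finset.mem_erase.1 hT
    rw [mem_powerset] at hTsub
    have hlt : T.card < I.card := card_lt_card (Finset.ssubset_iff_subset_ne.2 ⟨hTsub, hTne⟩)
    have hpow : (-1:ℝ)^(I.card - T.card) = -(-1:ℝ)^(I.card - 1 - T.card) := by
      have h1 : I.card - T.card = (I.card - 1 - T.card) + 1 := by omega
      rw [h1, pow_succ]; ring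
    have hrho : (0:ℝ) < ∑ j ∈ Tᶜ, r j := hrhoT T hTsub
    rw [hpow]
    field_simp
    ring
  rw [Finset.sum_congr rfl hpoint, Finset.sum_add_distrib, ← Finset.mul_sum]
  -- remaining: ∑_{T ∈ erase} (-1)^(c-1-tc) = 1
  have hA : ∑ T ∈ I.powerset.erase I, (-1:ℝ)^(I.card - 1 - T.card) = 1 := by
    have hEach : ∀ T ∈ I.powerset.erase I,
        (-1:ℝ)^(I.card - 1 - T.card) = -(-1:ℝ)^(I.card - T.card) := by
      intro T hT
      obtain ⟨hTne, hTsub⟩ := Finset.mem_erase.1 hT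
      rw [mem_powerset] at hTsub
      have hlt : T.card < I.card := card_lt_card (Finset.ssubset_iff_subset_ne.2 ⟨hTsub, hTne⟩)
      have h1 : I.card - T.card = (I.card - 1 - T.card) + 1 := by omega
      rw [h1, pow_succ]; ring
    rw [Finset.sum_congr rfl hEach, Finset.sum_neg_distrib]
    have := sum_pow_neg_one hne
    rw [← Finset.sum_erase_add _ _ hIp, Nat.sub_self, pow_zero] at this
    have h2 : ∑ T ∈ I.powerset.erase I, (-1:ℝ)^(I.card - T.card) = -1 := by linarith
    rw [h2]; norm_num
  rw [hA]
  ring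

lemma prSet_eq_G {m : ℕ} (r : Fin m → ℝ) (hr : ∀ i, 0 < r i) :
    ∀ I : Finset (Fin m), I ≠ univ → prSet r I = G r I := by
  intro I
  induction I using Finset.strongInduction with
  | _ I ih =>
    intro hI
    rcases I.eq_empty_or_nonempty with rfl | hne
    · rw [prSet_eq_prAux, card_empty, prAux_zero, G_empty r hr hI]
    · obtain ⟨t, ht⟩ : ∃ t, I.card = t + 1 := by
        refine ⟨I.card - 1, ?_⟩
        have := Finset.card_pos.2 hne
        omega
      rw [prSet_eq_prAux, ht, prAux_succ, G_rec r hr hI hne]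
      apply Finset.sum_congr rfl
      intro i hi
      have hce : (I.erase i).card = t := by rw [card_erase_of_mem hi, ht]; omega
      have : prAux t r (I.erase i) = prSet r (I.erase i) := by
        rw [prSet_eq_prAux, hce]
      rw [this, ih (I.erase i) (Finset.erase_ssubset hi)
        (subset_ne_univ (erase_subset i I) hI)]

lemma prSeq_nonneg {m t : ℕ} (r : Fin m → ℝ) (hr : ∀ i, 0 < r i) {ι : Fin t → Fin m}
    {I : Finset (Fin m)} (hinj : Function.Injective ι) (himg : Finset.univ.image ι = I)
    (hI : I ≠ univ) : 0 ≤ prSeq r ι := by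
  apply Finset.prod_nonneg
  intro s _
  apply le_of_lt
  apply div_pos (hr _)
  have h1 : ∑ u ∈ univ.filter (fun u => u < s), r (ι u)
      = ∑ j ∈ (univ.filter (fun u => u < s)).image ι, r j :=
    (Finset.sum_image (fun a _ b _ h => hinj h)).symm
  have h2 : (univ.filter (fun u => u < s)).image ι ⊆ I := by
    rw [← himg]; exact Finset.image_subset_image (filter_subset _ _)
  have h3 : (univ.filter (fun u => u < s)).image ι ≠ univ :=
    subset_ne_univ h2 hI
  have h4 : (0:ℝ) < ∑ j ∈ ((univ.filter (fun u => u < s)).image ι)ᶜ, r j := by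
    apply Finset.sum_pos (fun i _ => hr i)
    rwa [← Finset.compl_ne_univ_iff_nonempty, compl_compl]
  have h5 := Finset.sum_compl_add_sum ((univ.filter (fun u => u < s)).image ι) r
  rw [h1]
  linarith

lemma prSet_nonneg {m : ℕ} (r : Fin m → ℝ) (hr : ∀ i, 0 < r i) {I : Finset (Fin m)}
    (hI : I ≠ univ) : 0 ≤ prSet r I := by
  apply Finset.sum_nonneg
  intro ι _
  split
  · next h => exact prSeq_nonneg r hr h.1 h.2 hI
  · exact le_refl 0

lemma prSet_empty {m : ℕ} (r : Fin m → ℝ) : prSet r (∅ : Finset (Fin m)) = 1 := by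
  rw [prSet_eq_prAux, card_empty, prAux_zero]

lemma alt_sum_choose (P K : ℕ) (hP : 1 ≤ P) (hK : 1 ≤ K) :
    ∑ s ∈ range K, (-1:ℝ)^s * (P.choose s : ℝ) = (-1:ℝ)^(K-1) * ((P-1).choose (K-1) : ℝ) := by
  induction K with
  | zero => omega
  | succ K ih =>
    rcases Nat.eq_zero_or_pos K with rfl | hK'
    · simp
    · rw [Finset.sum_range_succ, ih hK']
      have hsplit : P.choose K = (P-1).choose (K-1) + (P-1).choose K := by
        have := Nat.choose_succ_succ (P-1) (K-1)
        rw [Nat.succ_eq_add_one, Nat.succ_eq_add_one] at this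
        rw [(by omega : P - 1 + 1 = P), (by omega : K - 1 + 1 = K)] at this
        omega
      have hpow : (-1:ℝ)^K = -(-1:ℝ)^(K-1) := by
        rw [(by omega : K = (K-1)+1), pow_succ]
        rw [(by omega : K - 1 + 1 - 1 = K - 1)]
        ring
      have h2 : (K + 1 - 1) = K := by omega
      rw [h2, hsplit, hpow]
      push_cast
      ring

lemma vand_cast (M N s : ℕ) :
    (((M+N).choose s : ℕ) : ℝ) = ∑ p ∈ Finset.HasAntidiagonal.antidiagonal s, (M.choose p.1 : ℝ) * (N.choose p.2 : ℝ) := by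
  rw [Nat.add_choose_eq]
  push_cast
  rfl

lemma double_alt (M N K : ℕ) (hKM : K ≤ M + 1) (hKN : K ≤ N + 1) :
    ∑ a ∈ range (M+1), ∑ b ∈ range (N+1),
        (if a + b < K then (-1:ℝ)^a * (-1:ℝ)^b * (M.choose a : ℝ) * (N.choose b : ℝ) else 0)
      = ∑ s ∈ range K, (-1:ℝ)^s * (((M+N).choose s : ℕ) : ℝ) := by
  have hR : ∑ s ∈ range K, (-1:ℝ)^s * (((M+N).choose s : ℕ) : ℝ)
      = ∑ x ∈ (range K).sigma (fun s => Finset.HasAntidiagonal.antidiagonal s),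
          (-1:ℝ)^x.2.1 * (-1:ℝ)^x.2.2 * (M.choose x.2.1 : ℝ) * (N.choose x.2.2 : ℝ) := by
    rw [Finset.sum_sigma]
    apply Finset.sum_congr rfl
    intro s _
    rw [vand_cast, Finset.mul_sum]
    apply Finset.sum_congr rfl
    intro p hp
    have : p.1 + p.2 = s := Finset.HasAntidiagonal.mem_antidiagonal.1 hp
    rw [← this, pow_add]
    ring
  rw [hR]
  rw [← Finset.sum_product']
  rw [← Finset.sum_filter]
  apply Finset.sum_bij' (i := fun (p : ℕ × ℕ) _ => (⟨p.1 + p.2, p⟩ : Σ _ : ℕ, ℕ × ℕ))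
    (j := fun x _ => x.2)
  · intro p hp
    simp only [Finset.mem_filter, Finset.mem_product, Finset.mem_range] at hp
    exact Finset.mem_sigma.2 ⟨Finset.mem_range.2 hp.2, Finset.HasAntidiagonal.mem_antidiagonal.2 rfl⟩
  · intro x hx
    simp only [Finset.mem_sigma, Finset.mem_range, Finset.HasAntidiagonal.mem_antidiagonal] at hx
    simp only [Finset.mem_filter, Finset.mem_product, Finset.mem_range]
    obtain ⟨h1, h2⟩ := hx
    refine ⟨⟨?_, ?_⟩, ?_⟩ <;> omega
  · intro p hp; rfl
  · intro x hx
    simp only [Finset.mem_sigma, Finset.mem_range, Finset.HasAntidiagonal.mem_antidiagonal] at hx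
    exact Sigma.ext hx.2 (heq_of_eq rfl)
  · intro p hp; rfl

lemma subset_ne_univ' {α : Type*} [Fintype α] {T I : Finset α} (h : T ⊆ I) (hI : I ≠ univ) :
    T ≠ univ := fun h0 => hI (univ_subset_iff.1 (h0 ▸ h))

lemma pull_ite {β : Type*} (c : Prop) [Decidable c] (f : β → ℝ) (s : Finset β) :
    ∑ x ∈ s, (if c then f x else 0) = if c then ∑ x ∈ s, f x else 0 := by
  split <;> simp

lemma sum_superset_eq {α : Type*} [Fintype α] [DecidableEq α] (T : Finset α) (g : Finset α → ℝ) :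
    ∑ I : Finset α, (if T ⊆ I then g I else 0) = ∑ S ∈ Tᶜ.powerset, g (T ∪ S) := by
  rw [← Finset.sum_filter]
  symm
  apply Finset.sum_bij' (i := fun S _ => T ∪ S) (j := fun I _ => I \ T)
  · intro S hS
    simp only [Finset.mem_filter, Finset.mem_univ, true_and]
    exact Finset.subset_union_left
  · intro I hI
    simp only [Finset.mem_filter, Finset.mem_univ, true_and] at hI
    rw [Finset.mem_powerset]
    intro x hx
    rw [Finset.mem_compl]
    exact (Finset.mem_sdiff.1 hx).2
  · intro S hS
    rw [Finset.mem_powerset] at hS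
    apply Finset.union_sdiff_cancel_left
    rw [Finset.disjoint_left]
    intro x hxT hxS
    exact (Finset.mem_compl.1 (hS hxS)) hxT
  · intro I hI
    simp only [Finset.mem_filter, Finset.mem_univ, true_and] at hI
    exact Finset.union_sdiff_of_subset hI
  · intro S hS; rfl

lemma card_union_pow {α : Type*} [Fintype α] [DecidableEq α] {T S : Finset α}
    (hS : S ∈ Tᶜ.powerset) : (T ∪ S).card = T.card + S.card := by
  rw [Finset.mem_powerset] at hS
  apply Finset.card_union_of_disjoint
  rw [Finset.disjoint_left]
  intro x hxT hxS
  exact (Finset.mem_compl.1 (hS hxS)) hxT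

lemma coeff_sum (k m n : ℕ) (hk : 0 < k) (hkm : k ≤ m) (hmn : m ≤ n)
    (T : Finset (Fin m)) (U : Finset (Fin n)) :
    (∑ I : Finset (Fin m), ∑ J : Finset (Fin n),
        if (I ≠ univ ∧ J ≠ univ ∧ I.card + J.card < k) ∧ T ⊆ I ∧ U ⊆ J
        then (-1:ℝ)^(I.card - T.card) * (-1:ℝ)^(J.card - U.card) else 0)
    = if T ≠ univ ∧ U ≠ univ ∧ T.card + U.card < k then
        (-1:ℝ)^(k-1-T.card-U.card) * (((m+n-1-T.card-U.card).choose (k-1-T.card-U.card) : ℕ) : ℝ)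
      else 0 := by
  by_cases hTU : T ≠ univ ∧ U ≠ univ ∧ T.card + U.card < k
  case neg =>
    rw [if_neg hTU]
    apply Finset.sum_eq_zero; intro I _
    apply Finset.sum_eq_zero; intro J _
    rw [if_neg]
    rintro ⟨⟨hI, hJ, hIJ⟩, hTI, hUJ⟩
    refine hTU ⟨subset_ne_univ' hTI hI, subset_ne_univ' hUJ hJ, ?_⟩
    have h1 := Finset.card_le_card hTI
    have h2 := Finset.card_le_card hUJ
    omega
  case pos =>
    obtain ⟨hT, hU, htu⟩ := hTU
    rw [if_pos ⟨hT, hU, htu⟩]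
    have htm : T.card < m := by
      have := Finset.card_lt_iff_ne_univ T
      rw [Fintype.card_fin] at this
      exact this.2 hT
    have hun : U.card < n := by
      have := Finset.card_lt_iff_ne_univ U
      rw [Fintype.card_fin] at this
      exact this.2 hU
    have hstep : ∀ I : Finset (Fin m), ∀ J : Finset (Fin n),
        (if (I ≠ univ ∧ J ≠ univ ∧ I.card + J.card < k) ∧ T ⊆ I ∧ U ⊆ J
          then (-1:ℝ)^(I.card - T.card) * (-1:ℝ)^(J.card - U.card) else 0)
        = if T ⊆ I then (if U ⊆ J then (if I.card + J.card < k
            then (-1:ℝ)^(I.card - T.card) * (-1:ℝ)^(J.card - U.card) else 0) else 0) else 0 := by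
      intro I J
      have hiff : ((I ≠ univ ∧ J ≠ univ ∧ I.card + J.card < k) ∧ T ⊆ I ∧ U ⊆ J)
          ↔ (T ⊆ I ∧ (U ⊆ J ∧ I.card + J.card < k)) := by
        constructor
        · rintro ⟨⟨h1, h2, h3⟩, h4, h5⟩; exact ⟨h4, h5, h3⟩
        · rintro ⟨h4, h5, h3⟩
          refine ⟨⟨?_, ?_, h3⟩, h4, h5⟩
          · intro hIu
            have : I.card = m := by rw [hIu, Finset.card_univ, Fintype.card_fin]
            omega
          · intro hJu
            have : J.card = n := by rw [hJu, Finset.card_univ, Fintype.card_fin]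
            omega
      rw [if_congr hiff rfl rfl, ite_and, ite_and]
    calc (∑ I : Finset (Fin m), ∑ J : Finset (Fin n),
        if (I ≠ univ ∧ J ≠ univ ∧ I.card + J.card < k) ∧ T ⊆ I ∧ U ⊆ J
        then (-1:ℝ)^(I.card - T.card) * (-1:ℝ)^(J.card - U.card) else 0)
        = ∑ I : Finset (Fin m), (if T ⊆ I then (∑ J : Finset (Fin n), (if U ⊆ J then
            (if I.card + J.card < k
              then (-1:ℝ)^(I.card - T.card) * (-1:ℝ)^(J.card - U.card) else 0) else 0)) else 0) := by
          apply Finset.sum_congr rfl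
          intro I _
          rw [Finset.sum_congr rfl (fun J _ => hstep I J), pull_ite]
      _ = ∑ S ∈ Tᶜ.powerset, ∑ S' ∈ Uᶜ.powerset,
            (if (T ∪ S).card + (U ∪ S').card < k
              then (-1:ℝ)^((T ∪ S).card - T.card) * (-1:ℝ)^((U ∪ S').card - U.card) else 0) := by
          rw [sum_superset_eq]
          apply Finset.sum_congr rfl
          intro S _
          rw [sum_superset_eq]
      _ = ∑ S ∈ Tᶜ.powerset, ∑ S' ∈ Uᶜ.powerset,
            (if S.card + S'.card < k - T.card - U.card
              then (-1:ℝ)^S.card * (-1:ℝ)^S'.card else 0) := by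
          apply Finset.sum_congr rfl; intro S hS
          apply Finset.sum_congr rfl; intro S' hS'
          rw [card_union_pow hS, card_union_pow hS']
          rw [Nat.add_sub_cancel_left, Nat.add_sub_cancel_left]
          apply if_congr _ rfl rfl
          omega
      _ = ∑ a ∈ range (Tᶜ.card + 1), (Tᶜ.card.choose a : ℕ) •
            (∑ b ∈ range (Uᶜ.card + 1), (Uᶜ.card.choose b : ℕ) •
              (if a + b < k - T.card - U.card then (-1:ℝ)^a * (-1:ℝ)^b else 0)) := by
          rw [Finset.sum_powerset_apply_card
            (fun a => ∑ S' ∈ Uᶜ.powerset,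
              (if a + S'.card < k - T.card - U.card then (-1:ℝ)^a * (-1:ℝ)^S'.card else 0))]
          apply Finset.sum_congr rfl
          intro a _
          congr 1
          rw [Finset.sum_powerset_apply_card
            (fun b => (if a + b < k - T.card - U.card then (-1:ℝ)^a * (-1:ℝ)^b else 0))]
      _ = ∑ a ∈ range (Tᶜ.card + 1), ∑ b ∈ range (Uᶜ.card + 1),
            (if a + b < k - T.card - U.card
              then (-1:ℝ)^a * (-1:ℝ)^b * (Tᶜ.card.choose a : ℝ) * (Uᶜ.card.choose b : ℝ)
              else 0) := by
          apply Finset.sum_congr rfl; intro a _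
          rw [Finset.smul_sum]
          apply Finset.sum_congr rfl; intro b _
          rw [nsmul_eq_mul, nsmul_eq_mul]
          split <;> ring
      _ = (-1:ℝ)^(k-1-T.card-U.card) * (((m+n-1-T.card-U.card).choose (k-1-T.card-U.card) : ℕ) : ℝ) := by
          have hTc : Tᶜ.card = m - T.card := by rw [Finset.card_compl, Fintype.card_fin]
          have hUc : Uᶜ.card = n - U.card := by rw [Finset.card_compl, Fintype.card_fin]
          rw [hTc, hUc]
          rw [double_alt (m - T.card) (n - U.card) (k - T.card - U.card)
            (by omega) (by omega)]
          rw [alt_sum_choose _ _ (by omega) (by omega)]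
          have e1 : k - T.card - U.card - 1 = k - 1 - T.card - U.card := by omega
          have e2 : m - T.card + (n - U.card) - 1 = m + n - 1 - T.card - U.card := by omega
          rw [e1, e2]

lemma powerset_eq_filter {α : Type*} [Fintype α] [DecidableEq α] (I : Finset α) :
    I.powerset = univ.filter (fun T => T ⊆ I) := by
  ext T; simp [mem_powerset]

/-- Probabilistic form of `F`:
`F(k,r,c) = ∑_{I ⊊ [m], J ⊊ [n], |I|+|J| < k} Pr(r,I)·Pr(c,J) / ((∑_{i∉I} r i)(∑_{j∉J} c j))`;
in particular `F(k,r,c) > 0`. -/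
theorem F_prob_form (k m n : ℕ) (hk : 0 < k) (hkm : k ≤ m) (hmn : m ≤ n)
    (r : Fin m → ℝ) (c : Fin n → ℝ) (hr : ∀ i, 0 < r i) (hc : ∀ j, 0 < c j) :
    F k r c =
      (∑ I : Finset (Fin m), ∑ J : Finset (Fin n),
        if I ≠ Finset.univ ∧ J ≠ Finset.univ ∧ I.card + J.card < k then
          prSet r I * prSet c J / ((∑ i ∈ Iᶜ, r i) * (∑ j ∈ Jᶜ, c j))
        else 0)
    ∧ 0 < F k r c := by
  have hm : 0 < m := lt_of_lt_of_le hk hkm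
  have hn : 0 < n := lt_of_le_of_lt (Nat.zero_le _) (lt_of_lt_of_le hm hmn)
  have hem : (∅ : Finset (Fin m)) ≠ univ := by
    intro h
    have : (univ : Finset (Fin m)).Nonempty := ⟨⟨0, hm⟩, mem_univ _⟩
    exact this.ne_empty h.symm
  have hen : (∅ : Finset (Fin n)) ≠ univ := by
    intro h
    have : (univ : Finset (Fin n)).Nonempty := ⟨⟨0, hn⟩, mem_univ _⟩
    exact this.ne_empty h.symm
  -- main equality : S = F
  have hSF : (∑ I : Finset (Fin m), ∑ J : Finset (Fin n),
        if I ≠ Finset.univ ∧ J ≠ Finset.univ ∧ I.card + J.card < k then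
          prSet r I * prSet c J / ((∑ i ∈ Iᶜ, r i) * (∑ j ∈ Jᶜ, c j))
        else 0) = F k r c := by
    have step1 : ∀ I : Finset (Fin m), ∀ J : Finset (Fin n),
        (if I ≠ Finset.univ ∧ J ≠ Finset.univ ∧ I.card + J.card < k then
          prSet r I * prSet c J / ((∑ i ∈ Iᶜ, r i) * (∑ j ∈ Jᶜ, c j))
        else 0)
        = ∑ T : Finset (Fin m), ∑ U : Finset (Fin n),
            (if (I ≠ univ ∧ J ≠ univ ∧ I.card + J.card < k) ∧ T ⊆ I ∧ U ⊆ J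
              then ((-1:ℝ)^(I.card - T.card) * (-1:ℝ)^(J.card - U.card))
                * (1 / ((∑ i ∈ Tᶜ, r i) * (∑ j ∈ Uᶜ, c j))) else 0) := by
      intro I J
      by_cases hcond : I ≠ Finset.univ ∧ J ≠ Finset.univ ∧ I.card + J.card < k
      case neg =>
        rw [if_neg hcond]
        symm
        apply Finset.sum_eq_zero; intro T _
        apply Finset.sum_eq_zero; intro U _
        rw [if_neg (fun h => hcond h.1)]
      case pos =>
        obtain ⟨hI, hJ, hIJ⟩ := hcond
        rw [if_pos ⟨hI, hJ, hIJ⟩, prSet_eq_G r hr I hI, prSet_eq_G c hc J hJ]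
        have hρ : (∑ i ∈ Iᶜ, r i) ≠ 0 := ne_of_gt (rho_pos r hr hI)
        have hγ : (∑ j ∈ Jᶜ, c j) ≠ 0 := ne_of_gt (rho_pos c hc hJ)
        have hGG : G r I * G c J / ((∑ i ∈ Iᶜ, r i) * (∑ j ∈ Jᶜ, c j))
            = (∑ T ∈ I.powerset, (-1:ℝ)^(I.card - T.card) / (∑ i ∈ Tᶜ, r i))
              * (∑ U ∈ J.powerset, (-1:ℝ)^(J.card - U.card) / (∑ j ∈ Uᶜ, c j)) := by
          rw [G, G]
          field_simp
        rw [hGG, Finset.sum_mul_sum]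
        rw [powerset_eq_filter I, Finset.sum_filter]
        apply Finset.sum_congr rfl
        intro T _
        rw [powerset_eq_filter J, Finset.sum_filter]
        by_cases h1 : T ⊆ I
        · rw [if_pos h1]
          apply Finset.sum_congr rfl
          intro U _
          have hiff : ((I ≠ univ ∧ J ≠ univ ∧ I.card + J.card < k) ∧ T ⊆ I ∧ U ⊆ J)
              ↔ (U ⊆ J) := by
            constructor
            · rintro ⟨_, _, h⟩; exact h
            · intro h; exact ⟨⟨hI, hJ, hIJ⟩, h1, h⟩
          rw [if_congr hiff.symm rfl rfl]
          split
          · ring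
          · rfl
        · rw [if_neg h1]
          symm
          apply Finset.sum_eq_zero
          intro U _
          rw [if_neg (fun h => h1 h.2.1)]
    rw [Finset.sum_congr rfl (fun I _ => Finset.sum_congr rfl (fun J _ => step1 I J))]
    -- swap sums
    rw [show (∑ I : Finset (Fin m), ∑ J : Finset (Fin n), ∑ T : Finset (Fin m),
          ∑ U : Finset (Fin n),
            (if (I ≠ univ ∧ J ≠ univ ∧ I.card + J.card < k) ∧ T ⊆ I ∧ U ⊆ J
              then ((-1:ℝ)^(I.card - T.card) * (-1:ℝ)^(J.card - U.card))
                * (1 / ((∑ i ∈ Tᶜ, r i) * (∑ j ∈ Uᶜ, c j))) else 0))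
        = ∑ T : Finset (Fin m), ∑ U : Finset (Fin n), ∑ I : Finset (Fin m),
          ∑ J : Finset (Fin n),
            (if (I ≠ univ ∧ J ≠ univ ∧ I.card + J.card < k) ∧ T ⊆ I ∧ U ⊆ J
              then ((-1:ℝ)^(I.card - T.card) * (-1:ℝ)^(J.card - U.card))
                * (1 / ((∑ i ∈ Tᶜ, r i) * (∑ j ∈ Uᶜ, c j))) else 0) from by
      rw [Finset.sum_congr rfl (fun I _ => Finset.sum_comm)]
      rw [Finset.sum_comm]
      rw [Finset.sum_congr rfl (fun T _ => Finset.sum_congr rfl (fun I _ => Finset.sum_comm))]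
      rw [Finset.sum_congr rfl (fun T _ => Finset.sum_comm)]]
    -- inner double sum = coefficient
    unfold F
    apply Finset.sum_congr rfl; intro T _
    apply Finset.sum_congr rfl; intro U _
    have pull : ∀ I : Finset (Fin m), ∀ J : Finset (Fin n),
        (if (I ≠ univ ∧ J ≠ univ ∧ I.card + J.card < k) ∧ T ⊆ I ∧ U ⊆ J
          then ((-1:ℝ)^(I.card - T.card) * (-1:ℝ)^(J.card - U.card))
            * (1 / ((∑ i ∈ Tᶜ, r i) * (∑ j ∈ Uᶜ, c j))) else 0)
        = (if (I ≠ univ ∧ J ≠ univ ∧ I.card + J.card < k) ∧ T ⊆ I ∧ U ⊆ J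
          then ((-1:ℝ)^(I.card - T.card) * (-1:ℝ)^(J.card - U.card)) else 0)
            * (1 / ((∑ i ∈ Tᶜ, r i) * (∑ j ∈ Uᶜ, c j))) := by
      intro I J; split <;> simp
    calc (∑ I : Finset (Fin m), ∑ J : Finset (Fin n),
          (if (I ≠ univ ∧ J ≠ univ ∧ I.card + J.card < k) ∧ T ⊆ I ∧ U ⊆ J
            then ((-1:ℝ)^(I.card - T.card) * (-1:ℝ)^(J.card - U.card))
              * (1 / ((∑ i ∈ Tᶜ, r i) * (∑ j ∈ Uᶜ, c j))) else 0))
        = (∑ I : Finset (Fin m), ∑ J : Finset (Fin n),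
            (if (I ≠ univ ∧ J ≠ univ ∧ I.card + J.card < k) ∧ T ⊆ I ∧ U ⊆ J
              then ((-1:ℝ)^(I.card - T.card) * (-1:ℝ)^(J.card - U.card)) else 0))
            * (1 / ((∑ i ∈ Tᶜ, r i) * (∑ j ∈ Uᶜ, c j))) := by
          simp only [pull]
          symm
          rw [Finset.sum_mul]
          exact Finset.sum_congr rfl (fun I _ => Finset.sum_mul _ _ _)
      _ = (if T ≠ univ ∧ U ≠ univ ∧ T.card + U.card < k then
            (-1:ℝ)^(k-1-T.card-U.card)
              * (((m+n-1-T.card-U.card).choose (k-1-T.card-U.card) : ℕ) : ℝ)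
          else 0) * (1 / ((∑ i ∈ Tᶜ, r i) * (∑ j ∈ Uᶜ, c j))) := by
          rw [coeff_sum k m n hk hkm hmn T U]
      _ = _ := by
          split
          · rw [mul_one_div]
          · rw [zero_mul]
  have hpos : 0 < (∑ I : Finset (Fin m), ∑ J : Finset (Fin n),
        if I ≠ Finset.univ ∧ J ≠ Finset.univ ∧ I.card + J.card < k then
          prSet r I * prSet c J / ((∑ i ∈ Iᶜ, r i) * (∑ j ∈ Jᶜ, c j))
        else 0) := by
    have hterm : ∀ I : Finset (Fin m), ∀ J : Finset (Fin n),
        0 ≤ (if I ≠ Finset.univ ∧ J ≠ Finset.univ ∧ I.card + J.card < k then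
          prSet r I * prSet c J / ((∑ i ∈ Iᶜ, r i) * (∑ j ∈ Jᶜ, c j)) else 0) := by
      intro I J
      split
      · next h =>
        apply div_nonneg
        · exact mul_nonneg (prSet_nonneg r hr h.1) (prSet_nonneg c hc h.2.1)
        · exact le_of_lt (mul_pos (rho_pos r hr h.1) (rho_pos c hc h.2.1))
      · exact le_refl 0
    apply Finset.sum_pos'
    · intro I _
      exact Finset.sum_nonneg (fun J _ => hterm I J)
    · refine ⟨∅, mem_univ _, ?_⟩
      apply Finset.sum_pos'
      · intro J _; exact hterm ∅ J
      · refine ⟨∅, mem_univ _, ?_⟩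
        rw [if_pos ⟨hem, hen, by simpa using hk⟩, prSet_empty, prSet_empty]
        apply div_pos (by norm_num)
        exact mul_pos (rho_pos r hr hem) (rho_pos c hc hen)
  exact ⟨hSF.symm, hSF ▸ hpos⟩
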